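/- For integers s, t ≥ 7, the strong metric dimension of the modular product of the cycles C_s and C_t satisfies dim_s(C_s ⋄ C_t) = st − 4·min{⌊s/3⌋, ⌊t/3⌋} − r, where r = 0 if min{s,t} ≡ 0 or 1 (mod 3); r = 1 if s = t and min{s,t} ≡ 2 (mod 3); and r = 2 if s ≠ t and min{s,t} ≡ 2 (mod 3). -/

import Mathlib

open SimpleGraph

/-- The closed neighborhood `N[v]` of a vertex. -/
def closedNbr {α : Type*} (G : SimpleGraph α) (v : α) : Set α :=
  insert v (G.neighborSet v)

/-- The modular product `G ⋄ H`. -/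
def modularProduct {α β : Type*} (G : SimpleGraph α) (H : SimpleGraph β) :
    SimpleGraph (α × β) :=
  SimpleGraph.fromRel (fun x y =>
    (x.1 = y.1 ∧ H.Adj x.2 y.2) ∨
    (G.Adj x.1 y.1 ∧ x.2 = y.2) ∨
    (G.Adj x.1 y.1 ∧ H.Adj x.2 y.2) ∨
    (x.1 ≠ y.1 ∧ x.2 ≠ y.2 ∧ ¬ G.Adj x.1 y.1 ∧ ¬ H.Adj x.2 y.2))

/-- `{g, g'}` is a `γ_G`-pair: the closed neighborhoods are disjoint and cover `V(G)`. -/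
def gammaPair {α : Type*} (G : SimpleGraph α) (g g' : α) : Prop :=
  closedNbr G g ∩ closedNbr G g' = ∅ ∧ closedNbr G g ∪ closedNbr G g' = Set.univ

/-- A universal vertex. -/
def IsUniversal {α : Type*} (G : SimpleGraph α) (v : α) : Prop :=
  closedNbr G v = Set.univ

/-- A complete graph: every two distinct vertices are adjacent. -/
def IsCompleteGraph {α : Type*} (G : SimpleGraph α) : Prop :=
  ∀ u v : α, u ≠ v → G.Adj u v

/-- `G` is a disjoint union of two cliques. -/
def TwoCliques {α : Type*} (G : SimpleGraph α) : Prop :=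
  ∃ A B : Set α, A.Nonempty ∧ B.Nonempty ∧ A ∪ B = Set.univ ∧ A ∩ B = ∅ ∧
    (∀ u ∈ A, ∀ v ∈ A, u ≠ v → G.Adj u v) ∧
    (∀ u ∈ B, ∀ v ∈ B, u ≠ v → G.Adj u v) ∧
    (∀ u ∈ A, ∀ v ∈ B, ¬ G.Adj u v)

/-- `u` and `v` are mutually maximally distant in `X`. -/
def MMD {α : Type*} (X : SimpleGraph α) (u v : α) : Prop :=
  (∀ w, X.Adj u w → X.edist w v ≤ X.edist u v) ∧
  (∀ w, X.Adj v w → X.edist w u ≤ X.edist u v)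

/-- A strong resolving set of `X`. -/
def IsStrongResolvingSet {α : Type*} (X : SimpleGraph α) (S : Set α) : Prop :=
  ∀ u v : α, u ≠ v → ∃ w ∈ S,
    X.dist u w = X.dist u v + X.dist v w ∨ X.dist v w = X.dist v u + X.dist u w

/-- The strong metric dimension of `X`. -/
noncomputable def sdim {α : Type*} (X : SimpleGraph α) : ℕ :=
  sInf {n | ∃ S : Set α, S.ncard = n ∧ IsStrongResolvingSet X S}

/-- The star `K_{1,n}`: the center is `none`, the leaves are `some i`. -/
def starGraph (n : ℕ) : SimpleGraph (Option (Fin n)) :=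
  SimpleGraph.fromRel (fun u v => u = none ∧ v ≠ none)

/-- The vertex cover number `β(X)`. -/
noncomputable def vertexCoverNumber {γ : Type*} (X : SimpleGraph γ) : ℕ :=
  sInf {n | ∃ C : Set γ, C.ncard = n ∧ ∀ u v, X.Adj u v → u ∈ C ∨ v ∈ C}


open Finset in
section
end

open Fin.CommRing

section CycleToolkit

variable {n : ℕ}

/-- closeness (distance ≤ 1) in the cycle, in ring form -/
def Cl (n : ℕ) [NeZero n] (u v : Fin n) : Prop := u = v ∨ u = v + 1 ∨ v = u + 1

variable [NeZero n]

lemma cl_refl (u : Fin n) : Cl n u u := Or.inl rfl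

lemma cl_symm {u v : Fin n} (h : Cl n u v) : Cl n v u := by
  rcases h with h | h | h
  · exact Or.inl h.symm
  · exact Or.inr (Or.inr h)
  · exact Or.inr (Or.inl h)

lemma val_eq_one_iff (hn : 2 ≤ n) {x : Fin n} : x.val = 1 ↔ x = 1 := by
  have h1 : (1 : Fin n).val = 1 % n := Fin.val_one' n
  have h2 : 1 % n = 1 := Nat.mod_eq_of_lt (by omega)
  rw [Fin.ext_iff]
  omega

lemma sub_eq_one_iff {u v : Fin n} : u - v = 1 ↔ u = v + 1 := by
  constructor
  · intro h; rw [← h]; ring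
  · intro h; rw [h]; ring

lemma cycle_adj_iff (hn : 7 ≤ n) {u v : Fin n} :
    (cycleGraph n).Adj u v ↔ (u = v + 1 ∨ v = u + 1) := by
  rw [cycleGraph_adj', val_eq_one_iff (by omega), val_eq_one_iff (by omega),
    sub_eq_one_iff, sub_eq_one_iff]

lemma cl_iff (hn : 7 ≤ n) {u v : Fin n} :
    Cl n u v ↔ (u = v ∨ (cycleGraph n).Adj u v) := by
  rw [cycle_adj_iff hn, Cl]

/-- small positive constants are nonzero -/
lemma const_ne_zero {k : ℕ} (h1 : 0 < k) (h2 : k < n) : (k : Fin n) ≠ 0 := by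
  rw [ne_eq, Fin.natCast_eq_zero]
  intro h
  exact absurd (Nat.le_of_dvd h1 h) (by omega)

lemma succ_val (h : Fin n) :
    (h + 1).val = h.val + 1 ∨ (h.val = n - 1 ∧ (h + 1).val = 0) := by
  have hn := h.isLt
  have hpos : 0 < n := h.pos
  have h1 : (1 : Fin n).val = 1 % n := Fin.val_one' n
  have hh := Fin.val_add h 1
  rcases Nat.lt_or_ge (h.val + 1) n with hlt | hge
  · left
    have h2 : 1 % n = 1 := Nat.mod_eq_of_lt (by omega)
    rw [hh, h1, h2, Nat.mod_eq_of_lt hlt]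
  · right
    refine ⟨by omega, ?_⟩
    rcases Nat.lt_or_ge 1 n with h2 | h2
    · have h3 : 1 % n = 1 := Nat.mod_eq_of_lt (by omega)
      rw [hh, h1, h3]
      have : h.val + 1 = n := by omega
      rw [this, Nat.mod_self]
    · have hn1 : n = 1 := by omega
      subst hn1
      omega

/-- value-level characterization of closeness -/
lemma cl_val_iff (hn : 7 ≤ n) {u v : Fin n} :
    Cl n u v ↔ (u.val = v.val ∨ u.val = v.val + 1 ∨ v.val = u.val + 1 ∨
      (u.val + 1 = n ∧ v.val = 0) ∨ (v.val + 1 = n ∧ u.val = 0)) := by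
  have hu := u.isLt; have hv := v.isLt
  have hv1 := (v + 1).isLt; have hu1 := (u + 1).isLt
  have e1 : u = v + 1 ↔ (u.val = v.val + 1 ∨ (v.val + 1 = n ∧ u.val = 0)) := by
    rcases succ_val v with h | ⟨h1, h2⟩ <;> rw [Fin.ext_iff] <;> omega
  have e2 : v = u + 1 ↔ (v.val = u.val + 1 ∨ (u.val + 1 = n ∧ v.val = 0)) := by
    rcases succ_val u with h | ⟨h1, h2⟩ <;> rw [Fin.ext_iff] <;> omega
  rw [Cl, e1, e2, Fin.ext_iff]
  omega

end CycleToolkit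
section CycleFacts

variable {n : ℕ} [NeZero n]

lemma fin_one_ne_zero (hn : 7 ≤ n) : (1 : Fin n) ≠ 0 := by
  have := const_ne_zero (n := n) (k := 1) (by omega) (by omega)
  simpa using this

lemma add_one_ne_self (hn : 7 ≤ n) (u : Fin n) : u + 1 ≠ u := by
  intro h
  exact fin_one_ne_zero hn (by linear_combination h)

lemma sub_one_ne_self (hn : 7 ≤ n) (u : Fin n) : u - 1 ≠ u := by
  intro h
  exact fin_one_ne_zero hn (by linear_combination -h)

lemma cl_succ (u : Fin n) : Cl n u (u + 1) := Or.inr (Or.inr rfl)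

lemma cl_pred (u : Fin n) : Cl n u (u - 1) := Or.inr (Or.inl (by ring))

lemma not_cl2 (hn : 7 ≤ n) (u : Fin n) : ¬ Cl n u (u + 1 + 1) := by
  have h1 := succ_val u
  have h2 := succ_val (u + 1)
  have hu := u.isLt
  have hu1 := (u + 1).isLt
  have hu2 := (u + 1 + 1).isLt
  rw [cl_val_iff hn]
  omega

lemma not_cl2' (hn : 7 ≤ n) (u : Fin n) : ¬ Cl n u (u - 1 - 1) := by
  intro h
  apply not_cl2 hn (u - 1 - 1)
  have e : (u - 1 - 1) + 1 + 1 = u := by ring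
  rw [e]
  exact cl_symm h

/-- common close-neighbors of an adjacent pair -/
lemma pair_absorb (hn : 7 ≤ n) {h y : Fin n} (h1 : Cl n y h) (h2 : Cl n y (h + 1)) :
    y = h ∨ y = h + 1 := by
  have q1 := succ_val h
  have q2 := succ_val (h + 1)
  have hy := y.isLt
  have hh := h.isLt
  have hh1 := (h + 1).isLt
  rw [cl_val_iff hn] at h1 h2
  rw [Fin.ext_iff, Fin.ext_iff]
  omega

/-- no three pairwise close distinct elements -/
lemma no_triple (hn : 7 ≤ n) {a b c : Fin n} (hab : a ≠ b) (hac : a ≠ c) (hbc : b ≠ c)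
    (h1 : Cl n a b) (h2 : Cl n a c) (h3 : Cl n b c) : False := by
  rw [cl_val_iff hn] at h1 h2 h3
  rw [ne_eq, Fin.ext_iff] at hab hac hbc
  have ha := a.isLt; have hb := b.isLt; have hc := c.isLt
  omega

/-- two distinct close elements are consecutive -/
lemma cl_consec {y y' : Fin n} (hne : y ≠ y') (h : Cl n y y') :
    y = y' + 1 ∨ y' = y + 1 := by
  rcases h with h | h | h
  · exact absurd h hne
  · exact Or.inl h
  · exact Or.inr h

/-- an element close to b but far from a, given a b adjacent-or-equal-ish; here: b = a+1 or a = b+1 -/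
lemma step_away (hn : 7 ≤ n) {a b : Fin n} (h : a = b + 1 ∨ b = a + 1) :
    ∃ y, Cl n y b ∧ ¬ Cl n y a ∧ y ≠ b := by
  rcases h with h | h
  · -- a = b + 1, step to b - 1
    refine ⟨b - 1, cl_symm (cl_pred b), ?_, sub_one_ne_self hn b⟩
    intro hc
    have e : b - 1 = a - 1 - 1 := by rw [h]; ring
    rw [e] at hc
    exact not_cl2' hn a (cl_symm hc)
  · -- b = a + 1, step to b + 1
    refine ⟨b + 1, cl_symm (cl_succ b), ?_, add_one_ne_self hn b⟩
    intro hc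
    have e : b + 1 = a + 1 + 1 := by rw [h]
    rw [e] at hc
    exact not_cl2 hn a (cl_symm hc)

lemma cl_mem_triple {x a : Fin n} (h : Cl n x a) : x = a ∨ x = a + 1 ∨ x = a - 1 := by
  rcases h with h | h | h
  · exact Or.inl h
  · exact Or.inr (Or.inl h)
  · exact Or.inr (Or.inr (eq_sub_of_add_eq h.symm))

/-- there is an element far from two given ones -/
lemma far_exists (hn : 7 ≤ n) (a b : Fin n) : ∃ x : Fin n, ¬ Cl n x a ∧ ¬ Cl n x b := by
  classical
  set S : Finset (Fin n) := {a, a + 1, a - 1, b, b + 1, b - 1} with hS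
  have hcard : S.card ≤ 6 := by
    rw [hS]
    refine (Finset.card_insert_le _ _).trans (Nat.succ_le_succ ?_)
    refine (Finset.card_insert_le _ _).trans (Nat.succ_le_succ ?_)
    refine (Finset.card_insert_le _ _).trans (Nat.succ_le_succ ?_)
    refine (Finset.card_insert_le _ _).trans (Nat.succ_le_succ ?_)
    refine (Finset.card_insert_le _ _).trans (Nat.succ_le_succ ?_)
    simp
  have hex : ∃ x, x ∉ S := by
    by_contra hall
    push_neg at hall
    have hsub : (Finset.univ : Finset (Fin n)) ⊆ S := fun x _ => hall x
    have hc := Finset.card_le_card hsub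
    rw [Finset.card_univ, Fintype.card_fin] at hc
    omega
  obtain ⟨x, hx⟩ := hex
  refine ⟨x, ?_, ?_⟩
  · intro hc
    rcases cl_mem_triple hc with h | h | h <;> subst h <;> simp [hS] at hx
  · intro hc
    rcases cl_mem_triple hc with h | h | h <;> subst h <;> simp [hS] at hx

end CycleFacts
section Product

variable {s t : ℕ} [NeZero s] [NeZero t]

lemma mp_adj (hs : 7 ≤ s) (ht : 7 ≤ t) {u v : Fin s × Fin t} :
    (modularProduct (cycleGraph s) (cycleGraph t)).Adj u v ↔
      (u ≠ v ∧ (Cl s u.1 v.1 ↔ Cl t u.2 v.2)) := by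
  rw [modularProduct, SimpleGraph.fromRel_adj]
  refine and_congr_right fun hne => ?_
  have hne1 : u.1 = v.1 → u.2 ≠ v.2 := fun h1 h2 => hne (Prod.ext h1 h2)
  have As := (cycleGraph s).adj_comm u.1 v.1
  have At := (cycleGraph t).adj_comm u.2 v.2
  rw [cl_iff hs, cl_iff ht]
  constructor
  · rintro (h | h) <;>
      rcases h with ⟨h1, h2⟩ | ⟨h1, h2⟩ | ⟨h1, h2⟩ | ⟨h1, h2, h3, h4⟩ <;> tauto
  · intro hiff
    by_cases h1 : u.1 = v.1
    · rcases hiff.mp (Or.inl h1) with h4 | h4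
      · exact absurd h4 (hne1 h1)
      · exact Or.inl (Or.inl ⟨h1, h4⟩)
    · by_cases h2 : (cycleGraph s).Adj u.1 v.1
      · rcases hiff.mp (Or.inr h2) with h4 | h4
        · exact Or.inl (Or.inr (Or.inl ⟨h2, h4⟩))
        · exact Or.inl (Or.inr (Or.inr (Or.inl ⟨h2, h4⟩)))
      · have h3 : ¬ (u.2 = v.2 ∨ (cycleGraph t).Adj u.2 v.2) := by
          intro hc
          rcases hiff.mpr hc with h4 | h4
          · exact h1 h4
          · exact h2 h4
        push_neg at h3
        exact Or.inl (Or.inr (Or.inr (Or.inr ⟨h1, h3.1, h2, h3.2⟩)))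

lemma cl_of_eq {a b : Fin s} (h : a = b) : Cl s a b := Or.inl h

lemma common_nbr (hs : 7 ≤ s) (ht : 7 ≤ t) (u v : Fin s × Fin t) :
    ∃ w, (modularProduct (cycleGraph s) (cycleGraph t)).Adj u w ∧
      (modularProduct (cycleGraph s) (cycleGraph t)).Adj v w := by
  obtain ⟨x, hx1, hx2⟩ := far_exists hs u.1 v.1
  obtain ⟨y, hy1, hy2⟩ := far_exists ht u.2 v.2
  refine ⟨(x, y), ?_, ?_⟩
  · rw [mp_adj hs ht]
    refine ⟨fun he => hx1 (cl_of_eq (congrArg Prod.fst he).symm), ?_⟩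
    exact iff_of_false (fun hc => hx1 (cl_symm hc)) (fun hc => hy1 (cl_symm hc))
  · rw [mp_adj hs ht]
    refine ⟨fun he => hx2 (cl_of_eq (congrArg Prod.fst he).symm), ?_⟩
    exact iff_of_false (fun hc => hx2 (cl_symm hc)) (fun hc => hy2 (cl_symm hc))

lemma mp_connected (hs : 7 ≤ s) (ht : 7 ≤ t) :
    (modularProduct (cycleGraph s) (cycleGraph t)).Connected := by
  rw [SimpleGraph.connected_iff]
  refine ⟨fun u v => ?_, ⟨((0 : Fin s), (0 : Fin t))⟩⟩
  obtain ⟨w, h1, h2⟩ := common_nbr hs ht u v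
  exact h1.reachable.trans h2.reachable.symm

lemma mp_dist_le_two (hs : 7 ≤ s) (ht : 7 ≤ t) (u v : Fin s × Fin t) :
    (modularProduct (cycleGraph s) (cycleGraph t)).dist u v ≤ 2 := by
  obtain ⟨w, h1, h2⟩ := common_nbr hs ht u v
  have := SimpleGraph.dist_le (SimpleGraph.Walk.cons h1 (SimpleGraph.Walk.cons h2.symm SimpleGraph.Walk.nil))
  simpa using this

lemma mp_dist_two (hs : 7 ≤ s) (ht : 7 ≤ t) {u v : Fin s × Fin t} (hne : u ≠ v)
    (hnadj : ¬ (modularProduct (cycleGraph s) (cycleGraph t)).Adj u v) :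
    (modularProduct (cycleGraph s) (cycleGraph t)).dist u v = 2 := by
  have h2 := mp_dist_le_two hs ht u v
  have h0 : (modularProduct (cycleGraph s) (cycleGraph t)).dist u v ≠ 0 :=
    fun hz => hne ((mp_connected hs ht).dist_eq_zero_iff.mp hz)
  have h1 : (modularProduct (cycleGraph s) (cycleGraph t)).dist u v ≠ 1 :=
    fun ho => hnadj (SimpleGraph.dist_eq_one_iff_adj.mp ho)
  omega

/-- distinguishing vertex for an edge -/
lemma distinguish (hs : 7 ≤ s) (ht : 7 ≤ t) {u v : Fin s × Fin t}
    (h : (modularProduct (cycleGraph s) (cycleGraph t)).Adj u v) :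
    ∃ w, w ≠ u ∧ w ≠ v ∧ (modularProduct (cycleGraph s) (cycleGraph t)).Adj u w ∧
      ¬ (modularProduct (cycleGraph s) (cycleGraph t)).Adj v w := by
  rw [mp_adj hs ht] at h
  obtain ⟨hne, hiff⟩ := h
  by_cases hcg : Cl s u.1 v.1
  · have hch : Cl t u.2 v.2 := hiff.mp hcg
    by_cases h1 : u.1 = v.1
    · -- same first coordinate; second coordinates adjacent
      have h2 : u.2 ≠ v.2 := fun hc => hne (Prod.ext h1 hc)
      obtain ⟨y, hy1, hy2, hy3⟩ := step_away ht (cl_consec h2 hch)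
      obtain ⟨x, hx1, _⟩ := far_exists hs u.1 u.1
      refine ⟨(x, y), ?_, ?_, ?_, ?_⟩
      · exact fun he => hx1 (cl_of_eq (congrArg Prod.fst he))
      · exact fun he => hy3 (congrArg Prod.snd he)
      · rw [mp_adj hs ht]
        refine ⟨fun he => hx1 (cl_of_eq (congrArg Prod.fst he).symm), ?_⟩
        exact iff_of_false (fun hc => hx1 (cl_symm hc)) (fun hc => hy2 (cl_symm hc))
      · rw [mp_adj hs ht]
        rintro ⟨-, hif⟩
        exact hx1 (h1 ▸ cl_symm (hif.mpr (cl_symm hy1)))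
    · by_cases h2 : u.2 = v.2
      · -- first coordinates adjacent, second equal
        obtain ⟨x, hx1, hx2, hx3⟩ := step_away hs (cl_consec h1 hcg)
        obtain ⟨y, hy1, _⟩ := far_exists ht u.2 u.2
        refine ⟨(x, y), ?_, ?_, ?_, ?_⟩
        · exact fun he => hy1 (cl_of_eq (congrArg Prod.snd he))
        · exact fun he => hx3 (congrArg Prod.fst he)
        · rw [mp_adj hs ht]
          refine ⟨fun he => hy1 (cl_of_eq (congrArg Prod.snd he).symm), ?_⟩
          exact iff_of_false (fun hc => hx2 (cl_symm hc)) (fun hc => hy1 (cl_symm hc))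
        · rw [mp_adj hs ht]
          rintro ⟨-, hif⟩
          exact hy1 (h2 ▸ cl_symm (hif.mp (cl_symm hx1)))
      · -- both coordinates adjacent
        obtain ⟨y, hy1, hy2, hy3⟩ := step_away ht (cl_consec h2 hch)
        obtain ⟨x, hx1, hx2⟩ := far_exists hs u.1 v.1
        refine ⟨(x, y), ?_, ?_, ?_, ?_⟩
        · exact fun he => hx1 (cl_of_eq (congrArg Prod.fst he))
        · exact fun he => hx2 (cl_of_eq (congrArg Prod.fst he))
        · rw [mp_adj hs ht]
          refine ⟨fun he => hx1 (cl_of_eq (congrArg Prod.fst he).symm), ?_⟩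
          exact iff_of_false (fun hc => hx1 (cl_symm hc)) (fun hc => hy2 (cl_symm hc))
        · rw [mp_adj hs ht]
          rintro ⟨-, hif⟩
          exact hx2 (cl_symm (hif.mpr (cl_symm hy1)))
  · -- far-far
    have hch : ¬ Cl t u.2 v.2 := fun hc => hcg (hiff.mpr hc)
    obtain ⟨y, hy1, hy2⟩ := far_exists ht u.2 v.2
    refine ⟨(v.1, y), ?_, ?_, ?_, ?_⟩
    · intro he
      apply hcg
      rw [← he]
      exact cl_refl _
    · exact fun he => hy2 (cl_of_eq (congrArg Prod.snd he))
    · rw [mp_adj hs ht]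
      refine ⟨?_, ?_⟩
      · intro he
        apply hcg
        rw [he]
        exact cl_refl _
      · exact iff_of_false hcg (fun hc => hy1 (cl_symm hc))
    · rw [mp_adj hs ht]
      rintro ⟨-, hif⟩
      exact hy2 (cl_symm (hif.mp (cl_of_eq rfl)))

/-- strong resolving sets are exactly complements of cliques -/
lemma srs_iff_compl_clique (hs : 7 ≤ s) (ht : 7 ≤ t) (S : Set (Fin s × Fin t)) :
    IsStrongResolvingSet (modularProduct (cycleGraph s) (cycleGraph t)) S ↔
      (∀ u v : Fin s × Fin t, u ∉ S → v ∉ S → u ≠ v →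
        (modularProduct (cycleGraph s) (cycleGraph t)).Adj u v) := by
  constructor
  · intro hS u v hu hv hne
    by_contra hnadj
    have hd2 : (modularProduct (cycleGraph s) (cycleGraph t)).dist u v = 2 :=
      mp_dist_two hs ht hne hnadj
    obtain ⟨w, hw, hcase⟩ := hS u v hne
    rcases hcase with hc | hc
    · have hle := mp_dist_le_two hs ht u w
      have : (modularProduct (cycleGraph s) (cycleGraph t)).dist v w = 0 := by omega
      rw [(mp_connected hs ht).dist_eq_zero_iff] at this
      exact hv (this ▸ hw)
    · have hle := mp_dist_le_two hs ht v w
      have hsymm : (modularProduct (cycleGraph s) (cycleGraph t)).dist v u = 2 := by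
        rw [SimpleGraph.dist_comm]; exact hd2
      have : (modularProduct (cycleGraph s) (cycleGraph t)).dist u w = 0 := by omega
      rw [(mp_connected hs ht).dist_eq_zero_iff] at this
      exact hu (this ▸ hw)
  · intro hcl u v hne
    by_cases hu : u ∈ S
    · refine ⟨u, hu, Or.inr ?_⟩
      rw [SimpleGraph.dist_self]
      omega
    by_cases hv : v ∈ S
    · refine ⟨v, hv, Or.inl ?_⟩
      rw [SimpleGraph.dist_self]
      omega
    have hadj : (modularProduct (cycleGraph s) (cycleGraph t)).Adj u v := hcl u v hu hv hne
    obtain ⟨w, hwu, hwv, ha, hna⟩ := distinguish hs ht hadj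
    have hw : w ∈ S := by
      by_contra hns
      exact hna (hcl v w hv hns (Ne.symm hwv))
    refine ⟨w, hw, Or.inr ?_⟩
    have d1 : (modularProduct (cycleGraph s) (cycleGraph t)).dist v u = 1 := by
      rw [SimpleGraph.dist_eq_one_iff_adj]; exact hadj.symm
    have d2 : (modularProduct (cycleGraph s) (cycleGraph t)).dist u w = 1 := by
      rw [SimpleGraph.dist_eq_one_iff_adj]; exact ha
    have d3 : (modularProduct (cycleGraph s) (cycleGraph t)).dist v w = 2 :=
      mp_dist_two hs ht (Ne.symm hwv) hna
    omega

end Product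
section Counting

variable {s : ℕ} [NeZero s]

/-- If the zeros are closed under +3 and 3 is prime to s, everything is a zero. -/
lemma zeros_cover (hs7 : 7 ≤ s) (nn : Fin s → ℕ) (hnd : ¬ (3 ∣ s)) (p0 : Fin s)
    (hp0 : nn p0 = 0) (hcl : ∀ p : Fin s, nn p = 0 → nn (p + 1 + 1 + 1) = 0) (x : Fin s) :
    nn x = 0 := by
  have hstep : ∀ k : ℕ, nn (p0 + ((3 * k : ℕ) : Fin s)) = 0 := by
    intro k
    induction k with
    | zero => simpa using hp0
    | succ k ih =>
      have e : ((3 * (k + 1) : ℕ) : Fin s) = ((3 * k : ℕ) : Fin s) + 1 + 1 + 1 := by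
        push_cast
        ring
      rw [e, show p0 + (((3 * k : ℕ) : Fin s) + 1 + 1 + 1)
            = (p0 + ((3 * k : ℕ) : Fin s)) + 1 + 1 + 1 by ring]
      exact hcl _ ih
  -- find a natural j with (3*j) % s = 1
  have hmod : s % 3 = 1 ∨ s % 3 = 2 := by
    have : s % 3 ≠ 0 := fun h => hnd (Nat.dvd_of_mod_eq_zero h)
    omega
  obtain ⟨j, hj⟩ : ∃ j : ℕ, 3 * j = 1 + 2 * s ∨ 3 * j = 1 + s := by
    rcases hmod with h | h
    · exact ⟨(2 * s + 1) / 3, Or.inl (by omega)⟩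
    · exact ⟨(s + 1) / 3, Or.inr (by omega)⟩
  have hj1 : ((3 * j : ℕ) : Fin s) = 1 := by
    rcases hj with h | h <;> rw [h] <;> push_cast <;>
      simp [Fin.natCast_self]
  have key : x = p0 + ((3 * (j * (x - p0).val) : ℕ) : Fin s) := by
    have : ((3 * (j * (x - p0).val) : ℕ) : Fin s)
        = ((3 * j : ℕ) : Fin s) * (((x - p0).val : ℕ) : Fin s) := by
      push_cast
      ring
    rw [this, hj1, Fin.cast_val_eq_self, one_mul]
    ring
  rw [key]
  exact hstep _

/-- the forcing lemma: `d = 2z` with `z ≥ 1` is impossible when `3 ∤ s`. -/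
lemma forcing_lemma (hs7 : 7 ≤ s) (nn : Fin s → ℕ) (hnd : ¬ (3 ∣ s))
    (h2 : ∀ g, nn g = 2 → nn (g + 1) = 0 ∨ nn (g + 1 + 1) = 0)
    (h3 : ∀ g, nn g = 2 → nn (g - 1) = 0 ∨ nn (g - 1 - 1) = 0)
    (hz : 0 < (Finset.univ.filter (fun g => nn g = 0)).card)
    (hd : (Finset.univ.filter (fun g => nn g = 2)).card
        = 2 * (Finset.univ.filter (fun g => nn g = 0)).card) : False := by
  classical
  set Z := Finset.univ.filter (fun g : Fin s => nn g = 0) with hZ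
  set D2 := Finset.univ.filter (fun g : Fin s => nn g = 2) with hD2
  have hinj1 : Function.Injective (fun g : Fin s => g - 1) := fun a b h => by
    have : a - 1 = b - 1 := h
    have := congrArg (· + 1) this
    simpa using this
  have hinj2 : Function.Injective (fun g : Fin s => g + 1) := fun a b h => by
    have : a + 1 = b + 1 := h
    have := congrArg (· - 1) this
    simpa using this
  -- D2 = (Z-1) ∪ (Z-1-1)
  have hsub1 : D2 ⊆ Z.image (fun g => g - 1) ∪ (Z.image (fun g => g - 1)).image (fun g => g - 1) := by
    intro g hg
    rw [hD2, Finset.mem_filter] at hg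
    rcases h2 g hg.2 with h | h
    · apply Finset.mem_union_left
      rw [Finset.mem_image]
      exact ⟨g + 1, by rw [hZ, Finset.mem_filter]; exact ⟨Finset.mem_univ _, h⟩, by ring⟩
    · apply Finset.mem_union_right
      rw [Finset.mem_image]
      refine ⟨g + 1, ?_, by ring⟩
      rw [Finset.mem_image]
      exact ⟨g + 1 + 1, by rw [hZ, Finset.mem_filter]; exact ⟨Finset.mem_univ _, h⟩, by ring⟩
  have hsub2 : D2 ⊆ Z.image (fun g => g + 1) ∪ (Z.image (fun g => g + 1)).image (fun g => g + 1) := by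
    intro g hg
    rw [hD2, Finset.mem_filter] at hg
    rcases h3 g hg.2 with h | h
    · apply Finset.mem_union_left
      rw [Finset.mem_image]
      exact ⟨g - 1, by rw [hZ, Finset.mem_filter]; exact ⟨Finset.mem_univ _, h⟩, by ring⟩
    · apply Finset.mem_union_right
      rw [Finset.mem_image]
      refine ⟨g - 1, ?_, by ring⟩
      rw [Finset.mem_image]
      exact ⟨g - 1 - 1, by rw [hZ, Finset.mem_filter]; exact ⟨Finset.mem_univ _, h⟩, by ring⟩
  have hcard1 : (Z.image (fun g => g - 1) ∪ (Z.image (fun g => g - 1)).image (fun g => g - 1)).card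
      ≤ 2 * Z.card := by
    refine (Finset.card_union_le _ _).trans ?_
    rw [Finset.card_image_of_injective _ hinj1, Finset.card_image_of_injective _ hinj1,
      Finset.card_image_of_injective _ hinj1]
    omega
  have heq1 : D2 = Z.image (fun g => g - 1) ∪ (Z.image (fun g => g - 1)).image (fun g => g - 1) :=
    Finset.eq_of_subset_of_card_le hsub1 (by omega)
  have hcard2 : (Z.image (fun g => g + 1) ∪ (Z.image (fun g => g + 1)).image (fun g => g + 1)).card
      ≤ 2 * Z.card := by
    refine (Finset.card_union_le _ _).trans ?_
    rw [Finset.card_image_of_injective _ hinj2, Finset.card_image_of_injective _ hinj2,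
      Finset.card_image_of_injective _ hinj2]
    omega
  have heq2 : D2 = Z.image (fun g => g + 1) ∪ (Z.image (fun g => g + 1)).image (fun g => g + 1) :=
    Finset.eq_of_subset_of_card_le hsub2 (by omega)
  -- membership helpers
  have hZmem : ∀ p : Fin s, p ∈ Z ↔ nn p = 0 := by
    intro p; rw [hZ, Finset.mem_filter]; simp
  have hDmem : ∀ p : Fin s, p ∈ D2 ↔ nn p = 2 := by
    intro p; rw [hD2, Finset.mem_filter]; simp
  have hplus1 : ∀ p : Fin s, p ∈ Z → nn (p + 1) = 2 := by
    intro p hp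
    rw [← hDmem, heq2]
    apply Finset.mem_union_left
    rw [Finset.mem_image]
    exact ⟨p, hp, rfl⟩
  have hplus2 : ∀ p : Fin s, p ∈ Z → nn (p + 1 + 1) = 2 := by
    intro p hp
    rw [← hDmem, heq2]
    apply Finset.mem_union_right
    rw [Finset.mem_image]
    refine ⟨p + 1, ?_, rfl⟩
    rw [Finset.mem_image]
    exact ⟨p, hp, rfl⟩
  -- zeros closed under +3
  have hclosed : ∀ p : Fin s, nn p = 0 → nn (p + 1 + 1 + 1) = 0 := by
    intro p hp
    have hp1 : nn (p + 1) = 2 := hplus1 p ((hZmem p).mpr hp)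
    have hp2 : nn (p + 1 + 1) = 2 := hplus2 p ((hZmem p).mpr hp)
    have hmem : p + 1 ∈ D2 := (hDmem _).mpr hp1
    rw [heq1, Finset.mem_union] at hmem
    rcases hmem with h | h
    · rw [Finset.mem_image] at h
      obtain ⟨q, hq, hq2⟩ := h
      have hqe : q = p + 1 + 1 := by linear_combination hq2
      rw [hqe, hZmem] at hq
      omega
    · rw [Finset.mem_image] at h
      obtain ⟨q', hq', hq2⟩ := h
      rw [Finset.mem_image] at hq'
      obtain ⟨q, hq, hq3⟩ := hq'
      have hqe : q = p + 1 + 1 + 1 := by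
        rw [← hq3] at hq2
        linear_combination hq2
      rw [hqe, hZmem] at hq
      exact hq
  -- pick a zero and cover everything
  obtain ⟨p0, hp0⟩ := Finset.card_pos.mp hz
  have hall : ∀ x : Fin s, nn x = 0 :=
    zeros_cover hs7 nn hnd p0 ((hZmem p0).mp hp0) hclosed
  have : nn (p0 + 1) = 2 := hplus1 p0 hp0
  rw [hall (p0 + 1)] at this
  omega

/-- counting bound, part (a) -/
lemma count_bound (hs7 : 7 ≤ s) (nn : Fin s → ℕ)
    (h1 : ∀ g, nn g ≤ 2)
    (h2 : ∀ g, nn g = 2 → nn (g + 1) = 0 ∨ nn (g + 1 + 1) = 0)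
    (h3 : ∀ g, nn g = 2 → nn (g - 1) = 0 ∨ nn (g - 1 - 1) = 0) :
    ∑ g : Fin s, nn g ≤ 4 * (s / 3) + (if s % 3 = 2 then 2 else 0) := by
  classical
  set Z := Finset.univ.filter (fun g : Fin s => nn g = 0) with hZ
  set D2 := Finset.univ.filter (fun g : Fin s => nn g = 2) with hD2
  set NZ := Finset.univ.filter (fun g : Fin s => 0 < nn g) with hNZ
  have hsum : ∑ g : Fin s, nn g = NZ.card + D2.card := by
    have hpt : ∀ g : Fin s, nn g = (if 0 < nn g then 1 else 0) + (if nn g = 2 then 1 else 0) := by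
      intro g
      have := h1 g
      interval_cases h : nn g <;> simp
    calc ∑ g : Fin s, nn g
        = ∑ g : Fin s, ((if 0 < nn g then 1 else 0) + (if nn g = 2 then 1 else 0)) :=
          Finset.sum_congr rfl (fun g _ => hpt g)
      _ = (∑ g : Fin s, if 0 < nn g then 1 else 0) + (∑ g : Fin s, if nn g = 2 then 1 else 0) :=
          Finset.sum_add_distrib
      _ = NZ.card + D2.card := by
          rw [hNZ, hD2, Finset.card_filter, Finset.card_filter]
  have hpart : Z.card + NZ.card = s := by
    have : NZ = Finset.univ.filter (fun g : Fin s => ¬ nn g = 0) := by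
      apply Finset.filter_congr
      intro g _
      constructor
      · omega
      · omega
    rw [hZ, this, Finset.card_filter_add_card_filter_not, Finset.card_univ,
      Fintype.card_fin]
  have hd2z : D2.card ≤ 2 * Z.card := by
    have hinj1 : Function.Injective (fun g : Fin s => g - 1) := fun a b h => by
      have : a - 1 = b - 1 := h
      have := congrArg (· + 1) this
      simpa using this
    have hsub1 : D2 ⊆ Z.image (fun g => g - 1) ∪ (Z.image (fun g => g - 1)).image (fun g => g - 1) := by
      intro g hg
      rw [hD2, Finset.mem_filter] at hg
      rcases h2 g hg.2 with h | h
      · apply Finset.mem_union_left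
        rw [Finset.mem_image]
        exact ⟨g + 1, by rw [hZ, Finset.mem_filter]; exact ⟨Finset.mem_univ _, h⟩, by ring⟩
      · apply Finset.mem_union_right
        rw [Finset.mem_image]
        refine ⟨g + 1, ?_, by ring⟩
        rw [Finset.mem_image]
        exact ⟨g + 1 + 1, by rw [hZ, Finset.mem_filter]; exact ⟨Finset.mem_univ _, h⟩, by ring⟩
    refine (Finset.card_le_card hsub1).trans ?_
    refine (Finset.card_union_le _ _).trans ?_
    rw [Finset.card_image_of_injective _ hinj1, Finset.card_image_of_injective _ hinj1,
      Finset.card_image_of_injective _ hinj1]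
    omega
  have hdnz : D2.card ≤ NZ.card := by
    apply Finset.card_le_card
    intro g hg
    rw [hD2, Finset.mem_filter] at hg
    rw [hNZ, Finset.mem_filter]
    exact ⟨Finset.mem_univ _, by omega⟩
  by_cases hnd : 3 ∣ s
  · obtain ⟨q, hq⟩ := hnd
    by_cases hm2 : s % 3 = 2 <;> simp only [hm2, if_true, if_false] <;> omega
  · have hforce : Z.card = 0 ∨ D2.card ≠ 2 * Z.card := by
      by_contra hcon
      push_neg at hcon
      refine forcing_lemma hs7 nn hnd h2 h3 ?_ ?_
      · rw [← hZ]; omega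
      · rw [← hZ, ← hD2]; exact hcon.2
    have hmod : s % 3 = 1 ∨ s % 3 = 2 := by
      have : s % 3 ≠ 0 := fun h => hnd (Nat.dvd_of_mod_eq_zero h)
      omega
    rcases hforce with hf | hf <;> rcases hmod with hm | hm <;>
      by_cases hm2 : s % 3 = 2 <;> simp only [hm2, if_true, if_false] <;> omega
end Counting
section CountingB

variable {s : ℕ} [NeZero s]

/-- counting part (b): forcing in the `s % 3 = 2` equality case -/
lemma count_forcing_b (hs7 : 7 ≤ s) (hm2 : s % 3 = 2) (nn : Fin s → ℕ)
    (h1 : ∀ g, nn g ≤ 2)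
    (h2 : ∀ g, nn g = 2 → nn (g + 1) = 0 ∨ nn (g + 1 + 1) = 0)
    (h3 : ∀ g, nn g = 2 → nn (g - 1) = 0 ∨ nn (g - 1 - 1) = 0)
    (hsum : ∑ g : Fin s, nn g = 4 * (s / 3) + 2) :
    (∀ g, nn g ≠ 1) ∧ ∃ g, nn g = 2 ∧ nn (g - 1) = 0 ∧ nn (g + 1) = 0 := by
  classical
  set Z := Finset.univ.filter (fun g : Fin s => nn g = 0) with hZ
  set D2 := Finset.univ.filter (fun g : Fin s => nn g = 2) with hD2
  set NZ := Finset.univ.filter (fun g : Fin s => 0 < nn g) with hNZ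
  set O1 := Finset.univ.filter (fun g : Fin s => nn g = 1) with hO1
  have hsum2 : ∑ g : Fin s, nn g = NZ.card + D2.card := by
    have hpt : ∀ g : Fin s, nn g = (if 0 < nn g then 1 else 0) + (if nn g = 2 then 1 else 0) := by
      intro g
      have := h1 g
      interval_cases h : nn g <;> simp
    calc ∑ g : Fin s, nn g
        = ∑ g : Fin s, ((if 0 < nn g then 1 else 0) + (if nn g = 2 then 1 else 0)) :=
          Finset.sum_congr rfl (fun g _ => hpt g)
      _ = (∑ g : Fin s, if 0 < nn g then 1 else 0) + (∑ g : Fin s, if nn g = 2 then 1 else 0) :=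
          Finset.sum_add_distrib
      _ = NZ.card + D2.card := by
          rw [hNZ, hD2, Finset.card_filter, Finset.card_filter]
  have hpart : Z.card + NZ.card = s := by
    have : NZ = Finset.univ.filter (fun g : Fin s => ¬ nn g = 0) := by
      apply Finset.filter_congr
      intro g _
      constructor
      · omega
      · omega
    rw [hZ, this, Finset.card_filter_add_card_filter_not, Finset.card_univ,
      Fintype.card_fin]
  have hd2z : D2.card ≤ 2 * Z.card := by
    have hinj1 : Function.Injective (fun g : Fin s => g - 1) := fun a b h => by
      have : a - 1 = b - 1 := h
      have := congrArg (· + 1) this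
      simpa using this
    have hsub1 : D2 ⊆ Z.image (fun g => g - 1) ∪ (Z.image (fun g => g - 1)).image (fun g => g - 1) := by
      intro g hg
      rw [hD2, Finset.mem_filter] at hg
      rcases h2 g hg.2 with h | h
      · apply Finset.mem_union_left
        rw [Finset.mem_image]
        exact ⟨g + 1, by rw [hZ, Finset.mem_filter]; exact ⟨Finset.mem_univ _, h⟩, by ring⟩
      · apply Finset.mem_union_right
        rw [Finset.mem_image]
        refine ⟨g + 1, ?_, by ring⟩
        rw [Finset.mem_image]
        exact ⟨g + 1 + 1, by rw [hZ, Finset.mem_filter]; exact ⟨Finset.mem_univ _, h⟩, by ring⟩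
    refine (Finset.card_le_card hsub1).trans ?_
    refine (Finset.card_union_le _ _).trans ?_
    rw [Finset.card_image_of_injective _ hinj1, Finset.card_image_of_injective _ hinj1,
      Finset.card_image_of_injective _ hinj1]
    omega
  have hdnz : D2.card ≤ NZ.card := by
    apply Finset.card_le_card
    intro g hg
    rw [hD2, Finset.mem_filter] at hg
    rw [hNZ, Finset.mem_filter]
    exact ⟨Finset.mem_univ _, by omega⟩
  have hsplit : NZ.card = D2.card + O1.card := by
    have e1 : D2 = NZ.filter (fun g => nn g = 2) := by
      ext g
      rw [hD2, hNZ, Finset.mem_filter, Finset.mem_filter, Finset.mem_filter]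
      constructor
      · rintro ⟨hu, hh⟩; exact ⟨⟨hu, by omega⟩, hh⟩
      · rintro ⟨⟨hu, -⟩, hh⟩; exact ⟨hu, hh⟩
    have e2 : O1 = NZ.filter (fun g => ¬ nn g = 2) := by
      ext g
      rw [hO1, hNZ, Finset.mem_filter, Finset.mem_filter, Finset.mem_filter]
      have := h1 g
      constructor
      · rintro ⟨hu, hh⟩; exact ⟨⟨hu, by omega⟩, by omega⟩
      · rintro ⟨⟨hu, hp⟩, hh⟩; exact ⟨hu, by omega⟩
    rw [e1, e2, Finset.card_filter_add_card_filter_not]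
  have hnd : ¬ (3 ∣ s) := by
    intro h
    obtain ⟨q, hq⟩ := h
    omega
  have hforce : Z.card = 0 ∨ D2.card ≠ 2 * Z.card := by
    by_contra hcon
    push_neg at hcon
    refine forcing_lemma hs7 nn hnd h2 h3 ?_ ?_
    · rw [← hZ]; omega
    · rw [← hZ, ← hD2]; exact hcon.2
  have hz1 : Z.card = s / 3 + 1 ∧ D2.card = 2 * (s / 3) + 1 ∧ O1.card = 0 := by
    rcases hforce with hf | hf <;> omega
  obtain ⟨hzc, hdc, hoc⟩ := hz1
  have hno1 : ∀ g, nn g ≠ 1 := by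
    intro g hg
    have : g ∈ O1 := by rw [hO1, Finset.mem_filter]; exact ⟨Finset.mem_univ _, hg⟩
    rw [Finset.card_eq_zero.mp hoc] at this
    exact absurd this (Finset.notMem_empty g)
  refine ⟨hno1, ?_⟩
  by_contra hno
  push_neg at hno
  set P := Finset.univ.filter (fun g : Fin s => nn g = 2 ∧ nn (g + 1) = 2) with hPdef
  have hinj2 : Function.Injective (fun g : Fin s => g + 1) := fun x y h => by
    have : x + 1 = y + 1 := h
    have := congrArg (· - 1) this
    simpa using this
  have hDP : D2 = P ∪ P.image (fun g => g + 1) := by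
    ext g
    rw [hD2, Finset.mem_filter, Finset.mem_union, hPdef]
    constructor
    · rintro ⟨-, hg⟩
      by_cases hgp : nn (g + 1) = 2
      · left
        rw [Finset.mem_filter]
        exact ⟨Finset.mem_univ _, hg, hgp⟩
      · have hgp0 : nn (g + 1) = 0 := by
          have := h1 (g + 1); have := hno1 (g + 1); omega
        have hgm : nn (g - 1) ≠ 0 := by
          intro hgm0
          exact hno g hg hgm0 hgp0
        have hgm2 : nn (g - 1) = 2 := by
          have := h1 (g - 1); have := hno1 (g - 1); omega
        right
        rw [Finset.mem_image]
        refine ⟨g - 1, ?_, by ring⟩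
        rw [Finset.mem_filter]
        refine ⟨Finset.mem_univ _, hgm2, ?_⟩
        rw [show g - 1 + 1 = g by ring]
        exact hg
    · rintro (hg | hg)
      · rw [Finset.mem_filter] at hg
        exact ⟨Finset.mem_univ _, hg.2.1⟩
      · rw [Finset.mem_image] at hg
        obtain ⟨p, hp, hpe⟩ := hg
        rw [Finset.mem_filter] at hp
        rw [← hpe]
        exact ⟨Finset.mem_univ _, hp.2.2⟩
  have hdisj : Disjoint P (P.image (fun g => g + 1)) := by
    rw [Finset.disjoint_left]
    intro g hg hg'
    rw [hPdef, Finset.mem_filter] at hg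
    rw [Finset.mem_image] at hg'
    obtain ⟨p, hp, hpe⟩ := hg'
    rw [hPdef, Finset.mem_filter] at hp
    rcases h2 p hp.2.1 with h | h
    · rw [hpe] at h
      omega
    · rw [show p + 1 + 1 = g + 1 by rw [hpe]] at h
      omega
  have hcard : D2.card = 2 * P.card := by
    rw [hDP, Finset.card_union_of_disjoint hdisj, Finset.card_image_of_injective _ hinj2]
    omega
  omega

end CountingB

section Fibers

variable {a b : ℕ} [NeZero a] [NeZero b]

/-- first-coordinate fiber counts -/
def fib (C : Finset (Fin a × Fin b)) (g : Fin a) : ℕ := (C.filter (fun p => p.1 = g)).card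

lemma fib_sum (C : Finset (Fin a × Fin b)) : ∑ g : Fin a, fib C g = C.card :=
  (Finset.card_eq_sum_card_fiberwise (fun x _ => Finset.mem_univ x.1)).symm

lemma fib_pos_iff (C : Finset (Fin a × Fin b)) (g : Fin a) :
    0 < fib C g ↔ ∃ h : Fin b, (g, h) ∈ C := by
  rw [fib, Finset.card_pos]
  constructor
  · rintro ⟨p, hp⟩
    rw [Finset.mem_filter] at hp
    exact ⟨p.2, by rw [show (g, p.2) = p from Prod.ext hp.2.symm rfl]; exact hp.1⟩
  · rintro ⟨h, hh⟩
    exact ⟨(g, h), by rw [Finset.mem_filter]; exact ⟨hh, rfl⟩⟩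

lemma fib_le_two (ha : 7 ≤ a) (hb : 7 ≤ b) (C : Finset (Fin a × Fin b))
    (hP : ∀ u ∈ C, ∀ v ∈ C, u ≠ v → (Cl a u.1 v.1 ↔ Cl b u.2 v.2)) (g : Fin a) :
    fib C g ≤ 2 := by
  by_contra hgt
  push_neg at hgt
  obtain ⟨p, q, r, hp, hq, hr, hpq, hpr, hqr⟩ := Finset.two_lt_card_iff.mp hgt
  rw [Finset.mem_filter] at hp hq hr
  have key : ∀ u v : Fin a × Fin b, u ∈ C → v ∈ C → u.1 = g → v.1 = g → u ≠ v →
      Cl b u.2 v.2 := by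
    intro u v hu hv hu1 hv1 huv
    exact (hP u hu v hv huv).mp (cl_of_eq (hu1.trans hv1.symm))
  have hpq2 : p.2 ≠ q.2 := fun he => hpq (Prod.ext (hp.2.trans hq.2.symm) he)
  have hpr2 : p.2 ≠ r.2 := fun he => hpr (Prod.ext (hp.2.trans hr.2.symm) he)
  have hqr2 : q.2 ≠ r.2 := fun he => hqr (Prod.ext (hq.2.trans hr.2.symm) he)
  exact no_triple hb hpq2 hpr2 hqr2
    (key p q hp.1 hq.1 hp.2 hq.2 hpq)
    (key p r hp.1 hr.1 hp.2 hr.2 hpr)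
    (key q r hq.1 hr.1 hq.2 hr.2 hqr)

lemma fib_pair (ha : 7 ≤ a) (hb : 7 ≤ b) (C : Finset (Fin a × Fin b))
    (hP : ∀ u ∈ C, ∀ v ∈ C, u ≠ v → (Cl a u.1 v.1 ↔ Cl b u.2 v.2)) (g : Fin a)
    (hg : fib C g = 2) :
    ∃ h : Fin b, (g, h) ∈ C ∧ (g, h + 1) ∈ C := by
  have h1 : 1 < fib C g := by omega
  obtain ⟨p, hp, q, hq, hpq⟩ := Finset.one_lt_card.mp h1
  rw [Finset.mem_filter] at hp hq
  have hpq2 : p.2 ≠ q.2 := fun he => hpq (Prod.ext (hp.2.trans hq.2.symm) he)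
  have hcl : Cl b p.2 q.2 := (hP p hp.1 q hq.1 hpq).mp (cl_of_eq (hp.2.trans hq.2.symm))
  have hpe : p = (g, p.2) := Prod.ext hp.2 rfl
  have hqe : q = (g, q.2) := Prod.ext hq.2 rfl
  rcases cl_consec hpq2 hcl with h | h
  · exact ⟨q.2, by rw [← hqe]; exact hq.1, by rw [← h, ← hpe]; exact hp.1⟩
  · exact ⟨p.2, by rw [← hpe]; exact hp.1, by rw [← h, ← hqe]; exact hq.1⟩

lemma fib_rule_plus (ha : 7 ≤ a) (hb : 7 ≤ b) (C : Finset (Fin a × Fin b))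
    (hP : ∀ u ∈ C, ∀ v ∈ C, u ≠ v → (Cl a u.1 v.1 ↔ Cl b u.2 v.2)) (g : Fin a)
    (hg : fib C g = 2) :
    fib C (g + 1) = 0 ∨ fib C (g + 1 + 1) = 0 := by
  by_contra hcon
  push_neg at hcon
  obtain ⟨h, hh1, hh2⟩ := fib_pair ha hb C hP g hg
  obtain ⟨y, hy⟩ := (fib_pos_iff C (g + 1)).mp (by omega)
  obtain ⟨z, hz⟩ := (fib_pos_iff C (g + 1 + 1)).mp (by omega)
  have hne1 : g ≠ g + 1 := (add_one_ne_self ha g).symm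
  have hne2 : g + 1 ≠ g + 1 + 1 := (add_one_ne_self ha (g + 1)).symm
  have hne3 : g ≠ g + 1 + 1 := fun he => not_cl2 ha g (cl_of_eq he)
  have hcy : Cl b h y := by
    refine (hP (g, h) hh1 (g + 1, y) hy (fun he => hne1 (congrArg Prod.fst he))).mp ?_
    exact cl_succ g
  have hcy' : Cl b (h + 1) y := by
    refine (hP (g, h + 1) hh2 (g + 1, y) hy (fun he => hne1 (congrArg Prod.fst he))).mp ?_
    exact cl_succ g
  have hncz : ¬ Cl b h z := by
    intro hc
    refine not_cl2 ha g ?_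
    exact (hP (g, h) hh1 (g + 1 + 1, z) hz (fun he => hne3 (congrArg Prod.fst he))).mpr hc
  have hncz' : ¬ Cl b (h + 1) z := by
    intro hc
    refine not_cl2 ha g ?_
    exact (hP (g, h + 1) hh2 (g + 1 + 1, z) hz (fun he => hne3 (congrArg Prod.fst he))).mpr hc
  have hcyz : Cl b y z := by
    refine (hP (g + 1, y) hy (g + 1 + 1, z) hz (fun he => hne2 (congrArg Prod.fst he))).mp ?_
    exact cl_succ (g + 1)
  rcases pair_absorb hb (cl_symm hcy) (cl_symm hcy') with h' | h'
  · exact hncz (h' ▸ hcyz)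
  · exact hncz' (h' ▸ hcyz)

lemma fib_rule_minus (ha : 7 ≤ a) (hb : 7 ≤ b) (C : Finset (Fin a × Fin b))
    (hP : ∀ u ∈ C, ∀ v ∈ C, u ≠ v → (Cl a u.1 v.1 ↔ Cl b u.2 v.2)) (g : Fin a)
    (hg : fib C g = 2) :
    fib C (g - 1) = 0 ∨ fib C (g - 1 - 1) = 0 := by
  by_contra hcon
  push_neg at hcon
  obtain ⟨h, hh1, hh2⟩ := fib_pair ha hb C hP g hg
  obtain ⟨y, hy⟩ := (fib_pos_iff C (g - 1)).mp (by omega)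
  obtain ⟨z, hz⟩ := (fib_pos_iff C (g - 1 - 1)).mp (by omega)
  have hne1 : g ≠ g - 1 := (sub_one_ne_self ha g).symm
  have hne2 : g - 1 ≠ g - 1 - 1 := (sub_one_ne_self ha (g - 1)).symm
  have hne3 : g ≠ g - 1 - 1 := fun he => not_cl2' ha g (cl_of_eq he)
  have hcy : Cl b h y := by
    refine (hP (g, h) hh1 (g - 1, y) hy (fun he => hne1 (congrArg Prod.fst he))).mp ?_
    exact cl_pred g
  have hcy' : Cl b (h + 1) y := by
    refine (hP (g, h + 1) hh2 (g - 1, y) hy (fun he => hne1 (congrArg Prod.fst he))).mp ?_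
    exact cl_pred g
  have hncz : ¬ Cl b h z := by
    intro hc
    refine not_cl2' ha g ?_
    exact (hP (g, h) hh1 (g - 1 - 1, z) hz (fun he => hne3 (congrArg Prod.fst he))).mpr hc
  have hncz' : ¬ Cl b (h + 1) z := by
    intro hc
    refine not_cl2' ha g ?_
    exact (hP (g, h + 1) hh2 (g - 1 - 1, z) hz (fun he => hne3 (congrArg Prod.fst he))).mpr hc
  have hcyz : Cl b y z := by
    refine (hP (g - 1, y) hy (g - 1 - 1, z) hz (fun he => hne2 (congrArg Prod.fst he))).mp ?_
    exact cl_pred (g - 1)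
  rcases pair_absorb hb (cl_symm hcy) (cl_symm hcy') with h' | h'
  · exact hncz (h' ▸ hcyz)
  · exact hncz' (h' ▸ hcyz)

end Fibers
section UpperBound

variable {s t : ℕ} [NeZero s] [NeZero t]

/-- transpose of a compatible set -/
lemma swap_compat (C : Finset (Fin s × Fin t))
    (hP : ∀ u ∈ C, ∀ v ∈ C, u ≠ v → (Cl s u.1 v.1 ↔ Cl t u.2 v.2)) :
    ∀ u ∈ C.image Prod.swap, ∀ v ∈ C.image Prod.swap, u ≠ v →
      (Cl t u.1 v.1 ↔ Cl s u.2 v.2) := by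
  intro u hu v hv huv
  rw [Finset.mem_image] at hu hv
  obtain ⟨p, hp, hpe⟩ := hu
  obtain ⟨q, hq, hqe⟩ := hv
  have hne : p ≠ q := by
    intro he
    exact huv (by rw [← hpe, ← hqe, he])
  have := hP p hp q hq hne
  rw [← hpe, ← hqe]
  simp only [Prod.fst_swap, Prod.snd_swap]
  exact this.symm

/-- main clique bound, case s ≤ t -/
lemma clique_bound_le (hs : 7 ≤ s) (ht : 7 ≤ t) (hst : s ≤ t) (C : Finset (Fin s × Fin t))
    (hP : ∀ u ∈ C, ∀ v ∈ C, u ≠ v → (Cl s u.1 v.1 ↔ Cl t u.2 v.2)) :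
    C.card ≤ 4 * (s / 3) + (if s % 3 = 2 then (if s = t then 1 else 2) else 0) := by
  classical
  have hb : C.card ≤ 4 * (s / 3) + (if s % 3 = 2 then 2 else 0) := by
    rw [← fib_sum C]
    exact count_bound hs (fib C) (fib_le_two hs ht C hP) (fib_rule_plus hs ht C hP)
      (fib_rule_minus hs ht C hP)
  by_cases hm2 : s % 3 = 2
  · by_cases hsteq : s = t
    · subst hsteq
      simp only [hm2, if_true]
      -- need C.card ≤ 4 * (s / 3) + 1
      by_contra hgt
      push_neg at hgt
      have hc : C.card = 4 * (s / 3) + 2 := by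
        rw [hm2] at hb
        simp only [if_true] at hb
        omega
      obtain ⟨hno1s, g0, hg2, hgm, hgp⟩ := count_forcing_b hs hm2 (fib C)
        (fib_le_two hs hs C hP) (fib_rule_plus hs hs C hP) (fib_rule_minus hs hs C hP)
        (by rw [fib_sum C]; exact hc)
      set C' := C.image Prod.swap with hC'
      have hP' := swap_compat C hP
      have hC'card : C'.card = C.card :=
        Finset.card_image_of_injective _ Prod.swap_injective
      obtain ⟨hno1t, -⟩ := count_forcing_b hs hm2 (fib C')
        (fib_le_two hs hs C' hP') (fib_rule_plus hs hs C' hP') (fib_rule_minus hs hs C' hP')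
        (by rw [fib_sum C', hC'card]; exact hc)
      -- pick an element of the isolated column
      obtain ⟨h0, hu⟩ := (fib_pos_iff C g0).mp (by omega)
      have huC' : (h0, g0) ∈ C' := by
        rw [hC', Finset.mem_image]
        exact ⟨(g0, h0), hu, rfl⟩
      have hfibt_pos : 0 < fib C' h0 := (fib_pos_iff C' h0).mpr ⟨g0, huC'⟩
      have hfibt_le : fib C' h0 ≤ 2 := fib_le_two hs hs C' hP' h0
      have hfibt2 : 1 < fib C' h0 := by
        have := hno1t h0
        omega
      obtain ⟨w, hw, hwne⟩ := Finset.exists_mem_ne hfibt2 (h0, g0)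
      rw [Finset.mem_filter] at hw
      have hw2ne : w.2 ≠ g0 := fun he => hwne (Prod.ext hw.2 he)
      have hclw : Cl s w.2 g0 := by
        refine (hP' w hw.1 (h0, g0) huC' hwne).mp ?_
        exact cl_of_eq hw.2
      -- w corresponds to an element of C with first coordinate w.2
      have hwC : (w.2, w.1) ∈ C := by
        rw [hC', Finset.mem_image] at hw
        obtain ⟨c, hc1, hc2⟩ := hw.1
        rw [← hc2]
        simpa using hc1
      rcases cl_consec hw2ne hclw with h' | h'
      · have : 0 < fib C (g0 + 1) := (fib_pos_iff C (g0 + 1)).mpr ⟨w.1, by rw [← h']; exact hwC⟩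
        omega
      · have hw2 : w.2 = g0 - 1 := eq_sub_of_add_eq h'.symm
        have : 0 < fib C (g0 - 1) := (fib_pos_iff C (g0 - 1)).mpr ⟨w.1, by rw [← hw2]; exact hwC⟩
        omega
    · simp only [hm2, if_true, hsteq, if_false]
      rw [hm2] at hb
      simpa using hb
  · simp only [hm2, if_false]
    rw [if_neg hm2] at hb
    simpa using hb

end UpperBound
section Construction

variable {n : ℕ} [NeZero n]

lemma val_natCast_eq {a : ℕ} (ha : a < n) : ((a : Fin n)).val = a := by
  rw [Fin.val_natCast]
  exact Nat.mod_eq_of_lt ha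

lemma cl_cast (hn : 7 ≤ n) {a b : ℕ} (ha : a + 2 ≤ n) (hb : b + 2 ≤ n) :
    Cl n (a : Fin n) (b : Fin n) ↔ (a ≤ b + 1 ∧ b ≤ a + 1) := by
  rw [cl_val_iff hn, val_natCast_eq (by omega), val_natCast_eq (by omega)]
  omega

end Construction

section Construction2

variable {s t : ℕ} [NeZero s] [NeZero t]

lemma clique_construct (hs : 7 ≤ s) (ht : 7 ≤ t) (hst : s ≤ t) :
    ∃ C : Finset (Fin s × Fin t),
      (∀ u ∈ C, ∀ v ∈ C, u ≠ v → (Cl s u.1 v.1 ↔ Cl t u.2 v.2)) ∧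
      C.card = 4 * (s / 3) + (if s % 3 = 2 then (if s = t then 1 else 2) else 0) := by
  classical
  suffices hgen : ∀ r : ℕ, ((r = 0 ∧ s % 3 ≠ 2) ∨ (r = 1 ∧ s % 3 = 2 ∧ s = t) ∨
      (r = 2 ∧ s % 3 = 2 ∧ s < t)) → ∃ C : Finset (Fin s × Fin t),
      (∀ u ∈ C, ∀ v ∈ C, u ≠ v → (Cl s u.1 v.1 ↔ Cl t u.2 v.2)) ∧
      C.card = 4 * (s / 3) + r by
    apply hgen
    by_cases h1 : s % 3 = 2
    · by_cases h2 : s = t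
      · right; left
        exact ⟨by rw [if_pos h1, if_pos h2], h1, h2⟩
      · right; right
        exact ⟨by rw [if_pos h1, if_neg h2], h1, lt_of_le_of_ne hst h2⟩
    · left
      exact ⟨by rw [if_neg h1], h1⟩
  intro r hrcases
  set m := s / 3 with hm
  have hm2 : 2 ≤ m := by rw [hm]; omega
  -- natural-number coordinates
  set X : ℕ → ℕ := fun i => if i < 4*m then 3*(i/4) + (i%4)/2 else 3*m with hX
  set Y : ℕ → ℕ := fun i => if i < 4*m then 3*(i/4) + (i%4)%2 else 3*m + (i - 4*m) with hY
  set B : ℕ → ℕ := fun i => if i < 4*m then i/4 else m with hB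
  have hXd : ∀ i, X i = (if i < 4*m then 3*(i/4) + (i%4)/2 else 3*m) := fun i => rfl
  have hYd : ∀ i, Y i = (if i < 4*m then 3*(i/4) + (i%4)%2 else 3*m + (i - 4*m)) := fun i => rfl
  have hBd : ∀ i, B i = (if i < 4*m then i/4 else m) := fun i => rfl
  have hsm : 3 * m ≤ s ∧ s < 3 * m + 3 := by rw [hm]; omega
  have fact1 : ∀ i < 4*m + r, X i + 2 ≤ s ∧ Y i + 2 ≤ t := by
    intro i hi
    rw [hXd, hYd]
    rcases hrcases with ⟨h0, h1⟩ | ⟨h0, h1, h2⟩ | ⟨h0, h1, h2⟩ <;>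
      by_cases hI : i < 4*m <;> simp only [hI, if_true, if_false] <;> omega
  have fact2X : ∀ i < 4*m + r, ∀ i' < 4*m + r,
      ((X i ≤ X i' + 1 ∧ X i' ≤ X i + 1) ↔ B i = B i') := by
    intro i hi i' hi'
    rw [hXd, hXd, hBd, hBd]
    rcases hrcases with ⟨h0, h1⟩ | ⟨h0, h1, h2⟩ | ⟨h0, h1, h2⟩ <;>
      by_cases hI : i < 4*m <;> by_cases hI' : i' < 4*m <;>
      simp only [hI, hI', if_true, if_false] <;> first | omega | (simp; omega) | simp
  have fact2Y : ∀ i < 4*m + r, ∀ i' < 4*m + r,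
      ((Y i ≤ Y i' + 1 ∧ Y i' ≤ Y i + 1) ↔ B i = B i') := by
    intro i hi i' hi'
    rw [hYd, hYd, hBd, hBd]
    rcases hrcases with ⟨h0, h1⟩ | ⟨h0, h1, h2⟩ | ⟨h0, h1, h2⟩ <;>
      by_cases hI : i < 4*m <;> by_cases hI' : i' < 4*m <;>
      simp only [hI, hI', if_true, if_false] <;> first | omega | (simp; omega) | simp
  have fact3 : ∀ i < 4*m + r, ∀ i' < 4*m + r, X i = X i' → Y i = Y i' → i = i' := by
    intro i hi i' hi'
    rw [hXd, hXd, hYd, hYd]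
    rcases hrcases with ⟨h0, h1⟩ | ⟨h0, h1, h2⟩ | ⟨h0, h1, h2⟩ <;>
      by_cases hI : i < 4*m <;> by_cases hI' : i' < 4*m <;>
      simp only [hI, hI', if_true, if_false] <;> omega
  set F : ℕ → Fin s × Fin t := fun i => (((X i : ℕ) : Fin s), ((Y i : ℕ) : Fin t)) with hF
  refine ⟨(Finset.range (4*m + r)).image F, ?_, ?_⟩
  · intro u hu v hv huv
    rw [Finset.mem_image] at hu hv
    obtain ⟨i, hi, hie⟩ := hu
    obtain ⟨i', hi', hie'⟩ := hv
    rw [Finset.mem_range] at hi hi'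
    obtain ⟨hx1, hy1⟩ := fact1 i hi
    obtain ⟨hx2, hy2⟩ := fact1 i' hi'
    rw [← hie, ← hie']
    simp only [hF]
    rw [cl_cast hs hx1 hx2, cl_cast ht hy1 hy2, fact2X i hi i' hi', fact2Y i hi i' hi']
  · rw [Finset.card_image_of_injOn, Finset.card_range]
    intro i hi i' hi' he
    rw [Finset.mem_coe, Finset.mem_range] at hi hi'
    obtain ⟨hx1, hy1⟩ := fact1 i hi
    obtain ⟨hx2, hy2⟩ := fact1 i' hi'
    simp only [hF, Prod.mk.injEq] at he
    refine fact3 i hi i' hi' ?_ ?_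
    · have := congrArg Fin.val he.1
      rw [val_natCast_eq (by omega : X i < s), val_natCast_eq (by omega : X i' < s)] at this
      exact this
    · have := congrArg Fin.val he.2
      rw [val_natCast_eq (by omega : Y i < t), val_natCast_eq (by omega : Y i' < t)] at this
      exact this

end Construction2
section Assembly

variable {s t : ℕ} [NeZero s] [NeZero t]

lemma combined_bound (hs : 7 ≤ s) (ht : 7 ≤ t) (C : Finset (Fin s × Fin t))
    (hP : ∀ u ∈ C, ∀ v ∈ C, u ≠ v → (Cl s u.1 v.1 ↔ Cl t u.2 v.2)) :
    C.card ≤ 4 * min (s / 3) (t / 3) + (if min s t % 3 = 2 then (if s = t then 1 else 2) else 0) := by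
  rcases le_or_gt s t with hst | hst
  · have hmin1 : min (s / 3) (t / 3) = s / 3 := Nat.min_eq_left (Nat.div_le_div_right hst)
    have hmin2 : min s t = s := Nat.min_eq_left hst
    rw [hmin1, hmin2]
    exact clique_bound_le hs ht hst C hP
  · have hst' : t ≤ s := le_of_lt hst
    have hmin1 : min (s / 3) (t / 3) = t / 3 := Nat.min_eq_right (Nat.div_le_div_right hst')
    have hmin2 : min s t = t := Nat.min_eq_right hst'
    rw [hmin1, hmin2]
    have hb := clique_bound_le ht hs hst' (C.image Prod.swap) (swap_compat C hP)
    rw [Finset.card_image_of_injective _ Prod.swap_injective] at hb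
    have hne : s ≠ t := by omega
    have hne' : t ≠ s := by omega
    refine hb.trans ?_
    by_cases hm : t % 3 = 2
    · simp [hm, hne, hne']
    · simp [hm]

lemma combined_construct (hs : 7 ≤ s) (ht : 7 ≤ t) :
    ∃ C : Finset (Fin s × Fin t),
      (∀ u ∈ C, ∀ v ∈ C, u ≠ v → (Cl s u.1 v.1 ↔ Cl t u.2 v.2)) ∧
      C.card = 4 * min (s / 3) (t / 3) +
        (if min s t % 3 = 2 then (if s = t then 1 else 2) else 0) := by
  rcases le_or_gt s t with hst | hst
  · have hmin1 : min (s / 3) (t / 3) = s / 3 := Nat.min_eq_left (Nat.div_le_div_right hst)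
    have hmin2 : min s t = s := Nat.min_eq_left hst
    rw [hmin1, hmin2]
    exact clique_construct hs ht hst
  · have hst' : t ≤ s := le_of_lt hst
    have hmin1 : min (s / 3) (t / 3) = t / 3 := Nat.min_eq_right (Nat.div_le_div_right hst')
    have hmin2 : min s t = t := Nat.min_eq_right hst'
    rw [hmin1, hmin2]
    obtain ⟨C, hP, hcard⟩ := clique_construct (s := t) (t := s) ht hs hst'
    refine ⟨C.image Prod.swap, swap_compat C hP, ?_⟩
    rw [Finset.card_image_of_injective _ Prod.swap_injective, hcard]
    have hne : s ≠ t := by omega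
    have hne' : t ≠ s := by omega
    by_cases hm : t % 3 = 2
    · simp [hm, hne, hne']
    · simp [hm]

end Assembly

/-- the strong metric dimension of the modular product of two cycles. -/
theorem sdim_cycle_modularProduct_cycle (s t r : ℕ) (hs : 7 ≤ s) (ht : 7 ≤ t)
    (hr : r = if min s t % 3 = 2 then (if s = t then 1 else 2) else 0) :
    sdim (modularProduct (cycleGraph s) (cycleGraph t)) =
      s * t - 4 * min (s / 3) (t / 3) - r := by
  classical
  haveI : NeZero s := ⟨by omega⟩
  haveI : NeZero t := ⟨by omega⟩
  set M := 4 * min (s / 3) (t / 3) +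
      (if min s t % 3 = 2 then (if s = t then 1 else 2) else 0) with hM
  obtain ⟨A, hAP, hAcard⟩ := combined_construct hs ht
  have hnatcard : Nat.card (Fin s × Fin t) = s * t := by
    rw [Nat.card_eq_fintype_card, Fintype.card_prod, Fintype.card_fin, Fintype.card_fin]
  -- the candidate strong resolving set
  set S₀ : Set (Fin s × Fin t) := (↑A : Set (Fin s × Fin t))ᶜ with hS₀
  have hS₀srs : IsStrongResolvingSet (modularProduct (cycleGraph s) (cycleGraph t)) S₀ := by
    rw [srs_iff_compl_clique hs ht]
    intro u v hu hv hne
    rw [hS₀, Set.notMem_compl_iff] at hu hv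
    rw [mp_adj hs ht]
    exact ⟨hne, hAP u (by exact_mod_cast hu) v (by exact_mod_cast hv) hne⟩
  have hS₀card : S₀.ncard = s * t - M := by
    have h1 : (↑A : Set (Fin s × Fin t)).ncard + S₀.ncard = s * t := by
      have := Set.ncard_add_ncard_compl (↑A : Set (Fin s × Fin t)) (Set.toFinite _) (Set.toFinite _)
      rw [hnatcard] at this
      rw [hS₀]
      exact this
    have h2 : (↑A : Set (Fin s × Fin t)).ncard = M := by
      rw [Set.ncard_coe_finset, hAcard, hM]
    omega
  have hMle : M ≤ s * t := by
    have := combined_bound hs ht A hAP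
    rw [hAcard] at this
    have hA : A.card ≤ s * t := by
      have := Finset.card_le_card (Finset.subset_univ A)
      rwa [Finset.card_univ, Fintype.card_prod, Fintype.card_fin, Fintype.card_fin] at this
    omega
  have hmem : (s * t - M) ∈
      {n | ∃ S : Set (Fin s × Fin t), S.ncard = n ∧
        IsStrongResolvingSet (modularProduct (cycleGraph s) (cycleGraph t)) S} :=
    ⟨S₀, hS₀card, hS₀srs⟩
  have hlb : ∀ n ∈ {n | ∃ S : Set (Fin s × Fin t), S.ncard = n ∧
      IsStrongResolvingSet (modularProduct (cycleGraph s) (cycleGraph t)) S},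
      s * t - M ≤ n := by
    rintro n ⟨S, hScard, hSsrs⟩
    rw [srs_iff_compl_clique hs ht] at hSsrs
    set Fc : Finset (Fin s × Fin t) := Sᶜ.toFinset with hFc
    have hFcP : ∀ u ∈ Fc, ∀ v ∈ Fc, u ≠ v → (Cl s u.1 v.1 ↔ Cl t u.2 v.2) := by
      intro u hu v hv huv
      rw [hFc, Set.mem_toFinset, Set.mem_compl_iff] at hu hv
      have := hSsrs u v hu hv huv
      rw [mp_adj hs ht] at this
      exact this.2
    have hFcle : Fc.card ≤ M := by
      rw [hM]
      exact combined_bound hs ht Fc hFcP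
    have hcompl : S.ncard + Sᶜ.ncard = s * t := by
      have := Set.ncard_add_ncard_compl S (Set.toFinite _) (Set.toFinite _)
      rw [hnatcard] at this
      exact this
    have hFceq : Sᶜ.ncard = Fc.card := by
      rw [hFc, Set.ncard_eq_toFinset_card']
    omega
  have : sdim (modularProduct (cycleGraph s) (cycleGraph t)) = s * t - M := by
    rw [sdim]
    exact le_antisymm (Nat.sInf_le hmem) (le_csInf ⟨_, hmem⟩ hlb)
  rw [this, hM, hr, Nat.sub_sub]
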